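/- Let R be a regex over Σ and suppose there exist words x, y and a nonempty word a such that x ∈ L(R), x ++ a ∈ L(R), a ++ y ∈ L(R*), and y ∈ L(R*). Let s := x ++ a ++ y. Then for every n ≥ 1, the word s^n has at least 2^n distinct parse trees of R*. (Induction core of the proof of Appendix Lemma 2 / Theorem 3 of the paper.) -/

import Mathlib

/-! Shared definitions: words, word power, parse trees of regular expressions,
(un)ambiguity, finite/infinite ambiguity, and the Brabrand–Thomsen overlap. -/

universe u

variable {α : Type u}

/-- `wpow w n` is the `n`-fold concatenation `w^n` of the word `w` with itself. -/
def wpow (w : List α) : ℕ → List α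
  | 0 => []
  | n + 1 => w ++ wpow w n

/-- Parse trees of a regular expression for a word, defined inductively:
the regex `ε` has a unique parse tree for the empty word; the character regex
for `a` has a unique parse tree for the word `[a]`; a parse tree of `R₁ + R₂`
(alternation) for `w` is a parse tree of `R₁` for `w` or a parse tree of `R₂`
for `w` (the two sides distinct); a parse tree of `R₁ * R₂` (concatenation)
for `w` is a decomposition `w = u ++ v` with parse trees of `R₁` for `u` and
of `R₂` for `v`; a parse tree of `R*` for `w` is a finite list of words
(possibly empty entries) concatenating to `w` with a parse tree of `R` for each. -/
inductive ParseTree : RegularExpression α → List α → Type u where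
  | eps : ParseTree RegularExpression.epsilon []
  | char (a : α) : ParseTree (RegularExpression.char a) [a]
  | plusLeft {R₁ R₂ : RegularExpression α} {w : List α} :
      ParseTree R₁ w → ParseTree (R₁ + R₂) w
  | plusRight {R₁ R₂ : RegularExpression α} {w : List α} :
      ParseTree R₂ w → ParseTree (R₁ + R₂) w
  | comp {R₁ R₂ : RegularExpression α} {u v : List α} :
      ParseTree R₁ u → ParseTree R₂ v → ParseTree (R₁ * R₂) (u ++ v)
  | starNil {R : RegularExpression α} : ParseTree R.star []
  | starCons {R : RegularExpression α} {u v : List α} :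
      ParseTree R u → ParseTree R.star v → ParseTree R.star (u ++ v)

/-- A regex is unambiguous if every word has at most one parse tree of it. -/
def Unambiguous (R : RegularExpression α) : Prop :=
  ∀ (w : List α) (t₁ t₂ : ParseTree R w), t₁ = t₂

/-- A regex is ambiguous if some word has two distinct parse trees of it. -/
def Ambiguous (R : RegularExpression α) : Prop :=
  ∃ (w : List α) (t₁ t₂ : ParseTree R w), t₁ ≠ t₂

/-- The word `w` has at least `k` distinct parse trees of `R`. -/
def HasAtLeastTrees (R : RegularExpression α) (w : List α) (k : ℕ) : Prop :=
  ∃ l : List (ParseTree R w), l.Nodup ∧ k ≤ l.length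

/-- Every word has at most `k` parse trees of `R`. -/
def BoundedBy (R : RegularExpression α) (k : ℕ) : Prop :=
  ∀ (w : List α) (l : List (ParseTree R w)), l.Nodup → l.length ≤ k

/-- `R` is finitely ambiguous: ambiguous, with a uniform bound on the number
of parse trees of any word. -/
def FinitelyAmbiguous (R : RegularExpression α) : Prop :=
  Ambiguous R ∧ ∃ k : ℕ, BoundedBy R k

/-- `R` is infinitely ambiguous: for every `k` some word has more than `k`
parse trees of `R`. -/
def InfinitelyAmbiguous (R : RegularExpression α) : Prop :=
  ∀ k : ℕ, ∃ w : List α, HasAtLeastTrees R w (k + 1)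

/-- Languages `L₁` and `L₂` overlap (nonemptiness of the Brabrand–Thomsen
overlap operator): there are words `x`, `y` and a nonempty word `a` with
`x ∈ L₁`, `x ++ a ∈ L₁`, `a ++ y ∈ L₂`, and `y ∈ L₂`. -/
def Overlaps (L₁ L₂ : Language α) : Prop :=
  ∃ x y a : List α, a ≠ [] ∧ x ∈ L₁ ∧ x ++ a ∈ L₁ ∧ a ++ y ∈ L₂ ∧ y ∈ L₂

/-- Cast a parse tree along an equality of words. -/
def castTree {R : RegularExpression α} {w w' : List α} (h : w = w') (t : ParseTree R w) :
    ParseTree R w' := h ▸ t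

/-- Fringe (list of segments) of a star parse tree. -/
def fringe {R : RegularExpression α} : {w : List α} → ParseTree R.star w → List (List α)
  | _, .starNil => []
  | _, .starCons (u := u) _ rest => u :: fringe rest

lemma fringe_cast {R : RegularExpression α} {w w' : List α} (h : w = w')
    (t : ParseTree R.star w) : fringe (castTree h t) = fringe t := by
  subst h; rfl

/-- Append two star parse trees. -/
def starAppend {R : RegularExpression α} : {u v : List α} → ParseTree R.star u →
    ParseTree R.star v → ParseTree R.star (u ++ v)
  | _, _, .starNil, t2 => t2
  | _, v, .starCons (u := u1) (v := u2) t rest, t2 =>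
      castTree (List.append_assoc u1 u2 v).symm (ParseTree.starCons t (starAppend rest t2))

lemma fringe_starAppend {R : RegularExpression α} : ∀ {u v : List α}
    (t1 : ParseTree R.star u) (t2 : ParseTree R.star v),
    fringe (starAppend t1 t2) = fringe t1 ++ fringe t2
  | _, _, .starNil, t2 => by simp [starAppend, fringe]
  | _, v, .starCons t rest, t2 => by
      simp [starAppend, fringe_cast, fringe, fringe_starAppend rest t2]

/-- Every word in the language of `R` has a parse tree. -/
lemma exists_tree {R : RegularExpression α} : ∀ {w : List α}, w ∈ R.matches' →
    Nonempty (ParseTree R w) := by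
  induction R with
  | zero => intro w h; simp [RegularExpression.matches'] at h
  | epsilon =>
      intro w h
      obtain rfl : w = [] := h
      exact ⟨.eps⟩
  | char c =>
      intro w h
      obtain rfl : w = [c] := h
      exact ⟨.char c⟩
  | plus R1 R2 ih1 ih2 =>
      intro w h
      rcases h with h | h
      · exact ⟨.plusLeft (ih1 h).some⟩
      · exact ⟨.plusRight (ih2 h).some⟩
  | comp R1 R2 ih1 ih2 =>
      intro w h
      rcases h with ⟨u, hu, v, hv, rfl⟩
      exact ⟨.comp (ih1 hu).some (ih2 hv).some⟩
  | star R ih =>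
      intro w h
      rw [RegularExpression.matches'] at h
      rw [Language.mem_kstar] at h
      obtain ⟨L, rfl, hL⟩ := h
      induction L with
      | nil => exact ⟨.starNil⟩
      | cons u L ihL =>
          obtain ⟨t⟩ := ih (hL u (by simp))
          obtain ⟨rest⟩ := ihL (fun v hv => hL v (by simp [hv]))
          exact ⟨.starCons t rest⟩

/-- The tree for `(x ++ a ++ y)^(length bs)` determined by bit list `bs`. -/
def mkTree {R : RegularExpression α} {x a y : List α}
    (tx : ParseTree R x) (txa : ParseTree R (x ++ a))
    (tay : ParseTree R.star (a ++ y)) (ty : ParseTree R.star y) :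
    (bs : List Bool) → ParseTree R.star (wpow (x ++ a ++ y) bs.length)
  | [] => .starNil
  | false :: bs =>
      castTree (by simp [wpow, List.append_assoc])
        (ParseTree.starCons tx (starAppend tay (mkTree tx txa tay ty bs)))
  | true :: bs =>
      castTree (by simp [wpow, List.append_assoc])
        (ParseTree.starCons txa (starAppend ty (mkTree tx txa tay ty bs)))

lemma fringe_mkTree_false {R : RegularExpression α} {x a y : List α}
    (tx : ParseTree R x) (txa : ParseTree R (x ++ a))
    (tay : ParseTree R.star (a ++ y)) (ty : ParseTree R.star y) (bs : List Bool) :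
    fringe (mkTree tx txa tay ty (false :: bs)) =
      x :: (fringe tay ++ fringe (mkTree tx txa tay ty bs)) := by
  simp [mkTree, fringe_cast, fringe, fringe_starAppend]

lemma fringe_mkTree_true {R : RegularExpression α} {x a y : List α}
    (tx : ParseTree R x) (txa : ParseTree R (x ++ a))
    (tay : ParseTree R.star (a ++ y)) (ty : ParseTree R.star y) (bs : List Bool) :
    fringe (mkTree tx txa tay ty (true :: bs)) =
      (x ++ a) :: (fringe ty ++ fringe (mkTree tx txa tay ty bs)) := by
  simp [mkTree, fringe_cast, fringe, fringe_starAppend]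

lemma mkTree_inj {R : RegularExpression α} {x a y : List α} (hne : x ≠ x ++ a)
    (tx : ParseTree R x) (txa : ParseTree R (x ++ a))
    (tay : ParseTree R.star (a ++ y)) (ty : ParseTree R.star y) :
    ∀ bs bs' : List Bool,
      fringe (mkTree tx txa tay ty bs) = fringe (mkTree tx txa tay ty bs') → bs = bs'
  | [], [], _ => rfl
  | [], false :: bs', h => by rw [fringe_mkTree_false] at h; simp [mkTree, fringe] at h; erw [fringe.eq_1] at h; simp at h
  | [], true :: bs', h => by rw [fringe_mkTree_true] at h; simp [mkTree, fringe] at h; erw [fringe.eq_1] at h; simp at h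
  | false :: bs, [], h => by rw [fringe_mkTree_false] at h; simp [mkTree, fringe] at h; erw [fringe.eq_1] at h; simp at h
  | true :: bs, [], h => by rw [fringe_mkTree_true] at h; simp [mkTree, fringe] at h; erw [fringe.eq_1] at h; simp at h
  | false :: bs, false :: bs', h => by
      rw [fringe_mkTree_false, fringe_mkTree_false] at h
      simp only [List.cons.injEq] at h
      have := List.append_cancel_left h.2
      rw [mkTree_inj hne tx txa tay ty bs bs' this]
  | true :: bs, true :: bs', h => by
      rw [fringe_mkTree_true, fringe_mkTree_true] at h
      simp only [List.cons.injEq] at h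
      have := List.append_cancel_left h.2
      rw [mkTree_inj hne tx txa tay ty bs bs' this]
  | false :: bs, true :: bs', h => by
      rw [fringe_mkTree_false, fringe_mkTree_true] at h
      injection h with h1 _
      exact absurd h1 hne
  | true :: bs, false :: bs', h => by
      rw [fringe_mkTree_true, fringe_mkTree_false] at h
      injection h with h1 _
      exact absurd h1.symm hne

/-- All bit lists of length `n`. -/
def bitLists : ℕ → List (List Bool)
  | 0 => [[]]
  | n + 1 => ((bitLists n).map (false :: ·)) ++ ((bitLists n).map (true :: ·))

lemma length_bitLists (n : ℕ) : (bitLists n).length = 2 ^ n := by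
  induction n with
  | zero => rfl
  | succ n ih => simp [bitLists, ih, pow_succ]; ring

lemma nodup_bitLists (n : ℕ) : (bitLists n).Nodup := by
  induction n with
  | zero => simp [bitLists]
  | succ n ih =>
      simp only [bitLists]
      refine List.Nodup.append (ih.map ?_) (ih.map ?_) ?_
      · intro u v h; simpa using h
      · intro u v h; simpa using h
      · intro u hu hv
        simp only [List.mem_map] at hu hv
        obtain ⟨bs, -, rfl⟩ := hu
        obtain ⟨bs', -, h⟩ := hv
        simp at h

lemma length_of_mem_bitLists {n : ℕ} {bs : List Bool} (h : bs ∈ bitLists n) :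
    bs.length = n := by
  induction n generalizing bs with
  | zero => simp [bitLists] at h; simp [h]
  | succ n ih =>
      simp only [bitLists, List.mem_append, List.mem_map] at h
      rcases h with ⟨bs', hbs', rfl⟩ | ⟨bs', hbs', rfl⟩ <;> simp [ih hbs']

/-- Induction core of Appendix Lemma 2 / Theorem 3: if `x ∈ L(R)`,
`x ++ a ∈ L(R)`, `a ++ y ∈ L(R*)`, `y ∈ L(R*)` with `a` nonempty, then for
every `n ≥ 1` the word `(x ++ a ++ y)^n` has at least `2^n` distinct parse
trees of `R*`. -/
theorem stmt_12 {α : Type u} (R : RegularExpression α) (x y a : List α)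
    (ha : a ≠ []) (hx : x ∈ R.matches') (hxa : x ++ a ∈ R.matches')
    (hay : a ++ y ∈ R.star.matches') (hy : y ∈ R.star.matches') :
    ∀ n : ℕ, 1 ≤ n →
      HasAtLeastTrees R.star (wpow (x ++ a ++ y) n) (2 ^ n) := by
  intro n _
  have hne : x ≠ x ++ a := fun h => ha (by simpa using congrArg List.length h)
  obtain ⟨tx⟩ := exists_tree hx
  obtain ⟨txa⟩ := exists_tree hxa
  obtain ⟨tay⟩ := exists_tree hay
  obtain ⟨ty⟩ := exists_tree hy
  refine ⟨(bitLists n).attach.map (fun p =>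
      castTree (congrArg (wpow (x ++ a ++ y)) (length_of_mem_bitLists p.2))
        (mkTree tx txa tay ty p.1)), ?_, ?_⟩
  · refine List.Nodup.map_on ?_ (List.nodup_attach.mpr (nodup_bitLists n))
    rintro ⟨bs, hbs⟩ - ⟨bs', hbs'⟩ - h
    have hf : fringe (mkTree tx txa tay ty bs) = fringe (mkTree tx txa tay ty bs') := by
      have := congrArg fringe h
      rwa [fringe_cast, fringe_cast] at this
    simpa using mkTree_inj hne tx txa tay ty bs bs' hf
  · simp [length_bitLists]
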